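/- If 𝒜 is a convex family of sets, then the cylindrical dimension of 𝒜 is at most the product of the upper dimension and the dual upper dimension of 𝒜: CD(𝒜) ≤ DD(𝒜) · DDd(𝒜). -/

import Mathlib

open Set

/-- A family of sets is convex if it is closed under set-theoretic betweenness. -/
def IsConvexFam {X : Type*} (𝒜 : Set (Set X)) : Prop :=
  ∀ S ∈ 𝒜, ∀ T ∈ 𝒜, ∀ C : Set X, S ⊆ C → C ⊆ T → C ∈ 𝒜

/-- A family is dominated if its union belongs to it. -/
def IsDominatedFam {X : Type*} (𝒜 : Set (Set X)) : Prop := ⋃₀ 𝒜 ∈ 𝒜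

/-- A family is supported if it is nonempty and its intersection belongs to it. -/
def IsSupportedFam {X : Type*} (𝒜 : Set (Set X)) : Prop := 𝒜.Nonempty ∧ ⋂₀ 𝒜 ∈ 𝒜

/-- A family is an interval if it equals `[A,B] = {C | A ⊆ C ⊆ B}` for some `A ⊆ B`. -/
def IsIntervalFam {X : Type*} (𝒜 : Set (Set X)) : Prop :=
  ∃ A B : Set X, A ⊆ B ∧ 𝒜 = Set.Icc A B

/-- `𝒢` dominates `𝒜` if there are dominated convex families `𝒟 G ⊆ 𝒜` (`G ∈ 𝒢`)
with `⋃ G ∈ 𝒢, 𝒟 G = 𝒜` and `⋃₀ (𝒟 G) = G`. -/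
def DominatesFam {X : Type*} (𝒢 𝒜 : Set (Set X)) : Prop :=
  𝒢 ⊆ 𝒜 ∧ ∃ 𝒟 : Set X → Set (Set X),
    (∀ G ∈ 𝒢, 𝒟 G ⊆ 𝒜 ∧ IsConvexFam (𝒟 G) ∧ IsDominatedFam (𝒟 G) ∧ ⋃₀ (𝒟 G) = G) ∧
    (⋃ G ∈ 𝒢, 𝒟 G) = 𝒜

/-- `𝒦` supports `𝒜` if there are supported convex families `𝒮 K ⊆ 𝒜` (`K ∈ 𝒦`)
with `⋃ K ∈ 𝒦, 𝒮 K = 𝒜` and `⋂₀ (𝒮 K) = K`. -/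
def SupportsFam {X : Type*} (𝒦 𝒜 : Set (Set X)) : Prop :=
  𝒦 ⊆ 𝒜 ∧ ∃ 𝒮 : Set X → Set (Set X),
    (∀ K ∈ 𝒦, 𝒮 K ⊆ 𝒜 ∧ IsConvexFam (𝒮 K) ∧ IsSupportedFam (𝒮 K) ∧ ⋂₀ (𝒮 K) = K) ∧
    (⋃ K ∈ 𝒦, 𝒮 K) = 𝒜

/-- The upper dimension: the minimal cardinality of a dominating subfamily. -/
noncomputable def upperDim {X : Type*} (𝒜 : Set (Set X)) : ℕ∞ :=
  sInf {n : ℕ∞ | ∃ 𝒢 : Set (Set X), DominatesFam 𝒢 𝒜 ∧ 𝒢.encard = n}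

/-- The dual upper dimension: the minimal cardinality of a supporting subfamily. -/
noncomputable def dualDim {X : Type*} (𝒜 : Set (Set X)) : ℕ∞ :=
  sInf {n : ℕ∞ | ∃ 𝒦 : Set (Set X), SupportsFam 𝒦 𝒜 ∧ 𝒦.encard = n}

/-- The cylindrical dimension: the minimal number of intervals whose union is `𝒜`. -/
noncomputable def cylDim {X : Type*} (𝒜 : Set (Set X)) : ℕ∞ :=
  sInf {n : ℕ∞ | ∃ 𝕀 : Set (Set (Set X)),
    (∀ J ∈ 𝕀, IsIntervalFam J) ∧ ⋃₀ 𝕀 = 𝒜 ∧ 𝕀.encard = n}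

open Classical in
noncomputable def chiFun {X : Type*} (A : Set X) (x : X) : Bool := decide (x ∈ A)

/-- The set-theoretic operation corresponding to a binary operation on `{0,1}`. -/
noncomputable def setOp {X : Type*} (op : Bool → Bool → Bool) (A B : Set X) : Set X :=
  {x | op (chiFun A x) (chiFun B x) = true}

/-- The tensor operation on families corresponding to a binary operation on `{0,1}`. -/
noncomputable def tensorFam {X : Type*} (op : Bool → Bool → Bool)
    (𝒜 ℬ : Set (Set X)) : Set (Set X) :=
  Set.image2 (setOp op) 𝒜 ℬ

/-- The convex shadow of `A` in `𝒜`. -/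
def convexShadow {X : Type*} (𝒜 : Set (Set X)) (A : Set X) : Set (Set X) :=
  {B | B ⊆ A ∧ Set.Icc B A ⊆ 𝒜}

/-- Domain of a relation. -/
def relDom {X Y : Type*} (R : Set (X × Y)) : Set X := {x | ∃ y, (x, y) ∈ R}

/-- Range of a relation. -/
def relRg {X Y : Type*} (R : Set (X × Y)) : Set Y := {y | ∃ x, (x, y) ∈ R}

/-- The family of (partial) functions from `X` to `Y`, as sets of pairs. -/
def partialFunFam (X Y : Type*) : Set (Set (X × Y)) :=
  {f | ∀ x y y', (x, y) ∈ f → (x, y') ∈ f → y = y'}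

/-- The family of relations on `X` with disjoint domain and range. -/
def exclFam (X : Type*) : Set (Set (X × X)) :=
  {R | relDom R ∩ relRg R = ∅}

/-- The family of relations on `X` whose domain is included in their range. -/
def inclFam (X : Type*) : Set (Set (X × X)) :=
  {R | relDom R ⊆ relRg R}

/-- The family of anonymous relations: every point of the domain has two distinct images. -/
def anonFam (X Y : Type*) : Set (Set (X × Y)) :=
  {R | ∀ x ∈ relDom R, ∃ y y' : Y, y ≠ y' ∧ (x, y) ∈ R ∧ (x, y') ∈ R}

/-- The family of rectangles `A × B`. -/
def rectFam (X Y : Type*) : Set (Set (X × Y)) :=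
  {P | ∃ (A : Set X) (B : Set Y), P = A ×ˢ B}

/-- General tensor disjunction of an indexed family of families of sets. -/
def gTensorDisj {ι X : Type*} (𝒜 : ι → Set (Set X)) : Set (Set X) :=
  {U | ∃ f : ι → Set X, (∀ i, f i ∈ 𝒜 i) ∧ U = ⋃ i, f i}

/-- The Kripke operator associated to a relation `ℛ ⊆ 𝒫(Y) × 𝒫(X)^n`. -/
def kripkeOp {X Y : Type*} {n : ℕ} (ℛ : Set (Set Y × (Fin n → Set X)))
    (𝒜 : Fin n → Set (Set X)) : Set (Set Y) :=
  {B | ∃ A : Fin n → Set X, (∀ i, A i ∈ 𝒜 i) ∧ (B, A) ∈ ℛ}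


lemma my_encard_prod {α β : Type*} (s : Set α) (t : Set β) :
    (s ×ˢ t).encard = s.encard * t.encard := by
  simp only [Set.encard, ENat.card, Cardinal.mk_congr (Equiv.Set.prod s t),
    Cardinal.mk_prod, map_mul, Cardinal.toENat_lift]

lemma my_key {X : Type*} (𝒜 : Set (Set X)) (h : IsConvexFam 𝒜)
    (𝒢 𝒦 : Set (Set X)) (hG : DominatesFam 𝒢 𝒜) (hK : SupportsFam 𝒦 𝒜) :
    cylDim 𝒜 ≤ 𝒢.encard * 𝒦.encard := by
  obtain ⟨hGA, 𝒟, h𝒟, h𝒟U⟩ := hG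
  obtain ⟨hKA, 𝒮, h𝒮, h𝒮U⟩ := hK
  set P : Set (Set X × Set X) := (𝒢 ×ˢ 𝒦) ∩ {p | p.2 ⊆ p.1} with hP
  set 𝕀 : Set (Set (Set X)) := (fun p : Set X × Set X => Set.Icc p.2 p.1) '' P with hI
  have h1 : ∀ J ∈ 𝕀, IsIntervalFam J := by
    rintro J ⟨⟨G, K⟩, ⟨hp, hsub⟩, rfl⟩
    exact ⟨K, G, hsub, rfl⟩
  have h2 : ⋃₀ 𝕀 = 𝒜 := by
    apply Set.Subset.antisymm
    · rintro C ⟨J, ⟨⟨G, K⟩, ⟨⟨hG, hK⟩, hsub⟩, rfl⟩, hC1, hC2⟩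
      exact h K (hKA hK) G (hGA hG) C hC1 hC2
    · intro A hA
      have hA1 : A ∈ ⋃ G ∈ 𝒢, 𝒟 G := h𝒟U.symm ▸ hA
      have hA2 : A ∈ ⋃ K ∈ 𝒦, 𝒮 K := h𝒮U.symm ▸ hA
      simp only [Set.mem_iUnion] at hA1 hA2
      obtain ⟨G, hG, hAG⟩ := hA1
      obtain ⟨K, hK, hAK⟩ := hA2
      have hsubG : A ⊆ G := (h𝒟 G hG).2.2.2 ▸ Set.subset_sUnion_of_mem hAG
      have hsubK : K ⊆ A := (h𝒮 K hK).2.2.2 ▸ Set.sInter_subset_of_mem hAK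
      refine ⟨Set.Icc K G, ⟨(G, K), ⟨⟨hG, hK⟩, hsubK.trans hsubG⟩, rfl⟩, hsubK, hsubG⟩
  have hle : cylDim 𝒜 ≤ 𝕀.encard := sInf_le ⟨𝕀, h1, h2, rfl⟩
  refine hle.trans ?_
  calc 𝕀.encard ≤ P.encard := Set.encard_image_le _ _
    _ ≤ (𝒢 ×ˢ 𝒦).encard := Set.encard_mono Set.inter_subset_left
    _ = 𝒢.encard * 𝒦.encard := my_encard_prod _ _

lemma my_empty {X : Type*} : cylDim (∅ : Set (Set X)) = 0 := by
  refine le_antisymm (sInf_le ⟨∅, by simp, by simp, Set.encard_empty⟩) zero_le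

theorem stmt1 {X : Type*} (𝒜 : Set (Set X)) (h : IsConvexFam 𝒜) :
    cylDim 𝒜 ≤ upperDim 𝒜 * dualDim 𝒜 := by

  classical
  set S1 := {n : ℕ∞ | ∃ 𝒢 : Set (Set X), DominatesFam 𝒢 𝒜 ∧ 𝒢.encard = n} with hS1
  set S2 := {n : ℕ∞ | ∃ 𝒦 : Set (Set X), SupportsFam 𝒦 𝒜 ∧ 𝒦.encard = n} with hS2
  have hu : upperDim 𝒜 = sInf S1 := rfl
  have hd : dualDim 𝒜 = sInf S2 := rfl
  -- case: 𝒜 empty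
  by_cases hA : 𝒜 = (∅ : Set (Set X))
  · subst hA; rw [my_empty]; exact zero_le
  by_cases h1 : S1.Nonempty
  · by_cases h2 : S2.Nonempty
    · obtain ⟨𝒢, hG𝒢, hGe⟩ := csInf_mem h1
      obtain ⟨𝒦, hK𝒦, hKe⟩ := csInf_mem h2
      rw [hu, hd, ← hGe, ← hKe]
      exact my_key 𝒜 h 𝒢 𝒦 hG𝒢 hK𝒦
    · have hd2 : dualDim 𝒜 = ⊤ := by
        rw [hd, Set.not_nonempty_iff_eq_empty.mp h2, sInf_empty]
      have hu0 : upperDim 𝒜 ≠ 0 := by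
        intro h0
        obtain ⟨𝒢, ⟨hGA, 𝒟, h𝒟, h𝒟U⟩, hGe⟩ := csInf_mem h1
        rw [← hu, h0, Set.encard_eq_zero] at hGe
        subst hGe
        simp only [Set.mem_empty_iff_false, Set.iUnion_of_empty, Set.iUnion_empty] at h𝒟U
        exact hA h𝒟U.symm
      rw [hd2, ENat.mul_top hu0]
      exact le_top
  · have hu2 : upperDim 𝒜 = ⊤ := by
      rw [hu, Set.not_nonempty_iff_eq_empty.mp h1, sInf_empty]
    by_cases h2 : S2.Nonempty
    · have hd0 : dualDim 𝒜 ≠ 0 := by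
        intro h0
        obtain ⟨𝒦, ⟨hKA, 𝒮, h𝒮, h𝒮U⟩, hKe⟩ := csInf_mem h2
        rw [← hd, h0, Set.encard_eq_zero] at hKe
        subst hKe
        simp only [Set.mem_empty_iff_false, Set.iUnion_of_empty, Set.iUnion_empty] at h𝒮U
        exact hA h𝒮U.symm
      rw [hu2, ENat.top_mul hd0]
      exact le_top
    · rw [hu2]
      have hd2 : dualDim 𝒜 = ⊤ := by
        rw [hd, Set.not_nonempty_iff_eq_empty.mp h2, sInf_empty]
      rw [hd2]
      exact le_top
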